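/- (Gerzon bound, real case) If v_1, ..., v_N ∈ R^r are unit vectors with |⟨v_i, v_j⟩| = α for all i ≠ j, where 0 ≤ α < 1, then N ≤ r(r+1)/2. -/

import Mathlib

open BigOperators

/-- Gerzon bound, real case. -/
theorem stmt_4 (N r : ℕ) (v : Fin N → Fin r → ℝ)
    (hunit : ∀ i, ∑ k, (v i k) ^ 2 = 1)
    (α : ℝ) (hα0 : 0 ≤ α) (hα1 : α < 1)
    (heq : ∀ i j : Fin N, i ≠ j → |∑ k, v i k * v j k| = α) :
    N ≤ r * (r + 1) / 2 := by
  classical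
  set W : Fin N → Sym2 (Fin r) → ℝ :=
    fun i => Sym2.lift ⟨fun k l => v i k * v i l, fun k l => by ring⟩ with hW
  have hli : LinearIndependent ℝ W := by
    rw [Fintype.linearIndependent_iff]
    intro c hc
    have hpt : ∀ k l : Fin r, ∑ i, c i * (v i k * v i l) = 0 := by
      intro k l
      have := congrFun hc s(k, l)
      simpa [hW, Finset.sum_apply] using this
    set s := ∑ i, c i with hs
    have hj : ∀ j : Fin N, α ^ 2 * s + c j * (1 - α ^ 2) = 0 := by
      intro j
      have key : ∑ i, c i * (∑ k, v i k * v j k) ^ 2 = 0 := by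
        have h0 : ∑ k, ∑ l, (∑ i, c i * (v i k * v i l)) * (v j k * v j l) = 0 := by
          simp [hpt]
        rw [← h0]
        simp only [pow_two, Finset.sum_mul, Finset.mul_sum]
        rw [Finset.sum_comm]
        refine Finset.sum_congr rfl fun k _ => ?_
        rw [Finset.sum_comm]
        refine Finset.sum_congr rfl fun l _ => ?_
        refine Finset.sum_congr rfl fun i _ => ?_
        ring
      have hsq : ∀ i : Fin N, (∑ k, v i k * v j k) ^ 2 = if i = j then 1 else α ^ 2 := by
        intro i
        by_cases h : i = j
        · subst h
          simp only [if_pos rfl]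
          have : ∑ k, v i k * v i k = 1 := by
            simpa [pow_two] using hunit i
          rw [this]; norm_num
        · rw [if_neg h, ← sq_abs, heq i j h]
      calc α ^ 2 * s + c j * (1 - α ^ 2)
          = ∑ i, (c i * α ^ 2 + if i = j then c i * (1 - α ^ 2) else 0) := by
            rw [Finset.sum_add_distrib, Finset.sum_ite_eq' Finset.univ j
              (fun i => c i * (1 - α ^ 2))]
            simp [← Finset.sum_mul, hs]
            ring
        _ = ∑ i, c i * (∑ k, v i k * v j k) ^ 2 := by
            refine Finset.sum_congr rfl fun i _ => ?_
            rw [hsq i]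
            by_cases h : i = j <;> simp [h]; ring
        _ = 0 := key
    have hsum : (N : ℝ) * (α ^ 2 * s) + s * (1 - α ^ 2) = 0 := by
      have h1 : ∑ j : Fin N, (α ^ 2 * s + c j * (1 - α ^ 2)) = 0 := by simp [hj]
      rw [Finset.sum_add_distrib, Finset.sum_const, ← Finset.sum_mul] at h1
      simpa [Fintype.card_fin, nsmul_eq_mul, ← hs] using h1
    have hs0 : s = 0 := by
      have hfac : s * ((N : ℝ) * α ^ 2 + (1 - α ^ 2)) = 0 := by linarith [hsum]
      rcases mul_eq_zero.mp hfac with h | h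
      · exact h
      · exfalso
        have hN : (0:ℝ) ≤ (N : ℝ) * α ^ 2 := by positivity
        nlinarith
    intro j
    have := hj j
    rw [hs0] at this
    have h1 : (1 : ℝ) - α ^ 2 ≠ 0 := by nlinarith
    have : c j * (1 - α ^ 2) = 0 := by linarith
    exact (mul_eq_zero.mp this).resolve_right h1
  have hcard := hli.fintype_card_le_finrank
  have hfin : Module.finrank ℝ (Sym2 (Fin r) → ℝ) = Fintype.card (Sym2 (Fin r)) := by
    simp [Module.finrank_pi]
  rw [hfin, Sym2.card, Fintype.card_fin, Fintype.card_fin] at hcard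
  rw [Nat.choose_two_right] at hcard
  simpa [Nat.add_sub_cancel, Nat.mul_comm] using hcard
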